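/- Let A be an invertible n×n real matrix with ‖A⁻¹‖₂ < 1. Suppose x and x̄ both satisfy Ax - |x| = b for some b ∈ ℝⁿ, where |x| denotes the entrywise absolute value. Then x = x̄. -/

import Mathlib

theorem ave_unique_solution {n : ℕ} (A : Matrix (Fin n) (Fin n) ℝ) (hA : IsUnit A)
    (hnorm : ‖Matrix.toEuclideanCLM (𝕜 := ℝ) A⁻¹‖ < 1)
    (b : EuclideanSpace ℝ (Fin n)) (x x' : EuclideanSpace ℝ (Fin n))
    (hx : ∀ i, A.mulVec x i - |x i| = b i)
    (hx' : ∀ i, A.mulVec x' i - |x' i| = b i) : x = x' := by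
  by_contra hne
  set y : EuclideanSpace ℝ (Fin n) := x - x' with hy
  have hy0 : y ≠ 0 := sub_ne_zero.mpr hne
  set z : EuclideanSpace ℝ (Fin n) := WithLp.toLp 2 (fun i => |x i| - |x' i|) with hz
  -- A.mulVec y = z
  have hAy : A.mulVec y = z := by
    funext i
    have h1 := hx i
    have h2 := hx' i
    have : A.mulVec x i - A.mulVec x' i = |x i| - |x' i| := by linarith
    rw [hy]
    show A.mulVec (x - x') i = z i
    rw [show x - x' = (x : Fin n → ℝ) - x' from rfl, Matrix.mulVec_sub]
    exact this
  have hyz : y = Matrix.toEuclideanCLM (𝕜 := ℝ) A⁻¹ z := by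
    have : A⁻¹.mulVec (A.mulVec y) = y := by
      rw [Matrix.mulVec_mulVec, Matrix.nonsing_inv_mul A (Matrix.isUnit_iff_isUnit_det A |>.mp hA), Matrix.one_mulVec]
    rw [show z = WithLp.toLp 2 (A.mulVec y) from by rw [hAy]]
    rw [show (Matrix.toEuclideanCLM (𝕜 := ℝ) A⁻¹) (WithLp.toLp 2 (A.mulVec y)) = WithLp.toLp 2 (A⁻¹.mulVec (A.mulVec y)) from rfl]
    rw [this]
  have hzle : ‖z‖ ≤ ‖y‖ := by
    rw [EuclideanSpace.norm_eq, EuclideanSpace.norm_eq]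
    apply Real.sqrt_le_sqrt
    apply Finset.sum_le_sum
    intro i _
    have : |z i| ≤ |y i| := by
      simp only [hz, hy]
      calc |(|x i| - |x' i|)| ≤ |x i - x' i| := abs_abs_sub_abs_le_abs_sub _ _
        _ = |(x - x') i| := rfl
    simpa [Real.norm_eq_abs, sq_abs] using pow_le_pow_left₀ (abs_nonneg (z i)) this 2
  have : ‖y‖ ≤ ‖Matrix.toEuclideanCLM (𝕜 := ℝ) A⁻¹‖ * ‖z‖ := by
    rw [hyz]; exact ContinuousLinearMap.le_opNorm _ _
  have hlt : ‖y‖ < ‖y‖ := by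
    calc ‖y‖ ≤ ‖Matrix.toEuclideanCLM (𝕜 := ℝ) A⁻¹‖ * ‖z‖ := this
      _ ≤ ‖Matrix.toEuclideanCLM (𝕜 := ℝ) A⁻¹‖ * ‖y‖ := by
          exact mul_le_mul_of_nonneg_left hzle (norm_nonneg _)
      _ < 1 * ‖y‖ := by
          exact mul_lt_mul_of_pos_right hnorm (norm_pos_iff.mpr hy0)
      _ = ‖y‖ := one_mul _
  exact absurd hlt (lt_irrefl _)
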